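/- Let n, m, o be positive natural numbers, v : Fin m → ℝ, c : Fin n → Fin o → ℝ with c i t ≥ 0, w : Fin m → Fin o → ℝ, α : ℝ, and h : Fin n → Fin m → ℝ. Define f(S) = ∑_{j} (v j * ∑_{t} min(w j t, ∑_{i ∈ A_j(S)} c i t) + α * ∑_{i ∈ A_j(S)} h i j) for assignments S : Finset (Fin n × Fin m), where A_j(S) = {i | (i, j) ∈ S}. Then for every assignment S and every pair (i, j) ∉ S, the marginal gain of adding (i, j) equals the algorithm's gain formula: f(S ∪ {(i,j)}) − f(S) = v j * ∑_{t} min(c i t, max(0, w j t − ∑_{i' ∈ A_j(S)} c i' t)) + α * h i j. -/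
import Mathlib


open Finset

/-- The set of robots assigned to task `j` under assignment `S`. -/
def Assigned {n m : ℕ} (S : Finset (Fin n × Fin m)) (j : Fin m) : Finset (Fin n) :=
  Finset.univ.filter fun i => (i, j) ∈ S

/-- The team objective function. -/
def teamObj {n m o : ℕ} (v : Fin m → ℝ) (c : Fin n → Fin o → ℝ) (w : Fin m → Fin o → ℝ)
    (α : ℝ) (h : Fin n → Fin m → ℝ) (S : Finset (Fin n × Fin m)) : ℝ :=
  ∑ j, (v j * ∑ t, min (w j t) (∑ i ∈ Assigned S j, c i t)
        + α * ∑ i ∈ Assigned S j, h i j)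

lemma min_shift (a s cv : ℝ) (hcv : 0 ≤ cv) :
    min a (s + cv) - min a s = min cv (max 0 (a - s)) := by
  simp only [min_def, max_def]
  split_ifs <;> linarith

lemma assigned_union {n m : ℕ} (S : Finset (Fin n × Fin m)) (i : Fin n) (j j' : Fin m) :
    Assigned (S ∪ {(i, j)}) j' =
      if j' = j then insert i (Assigned S j') else Assigned S j' := by
  unfold Assigned
  ext x
  by_cases hj : j' = j <;> simp [hj, Prod.ext_iff, or_comm] <;> aesop

theorem marginal_gain_formula {n m o : ℕ} (hn : 0 < n) (hm : 0 < m) (ho : 0 < o)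
    (v : Fin m → ℝ)
    (c : Fin n → Fin o → ℝ) (hc : ∀ i t, 0 ≤ c i t)
    (w : Fin m → Fin o → ℝ)
    (α : ℝ) (h : Fin n → Fin m → ℝ) :
    ∀ (S : Finset (Fin n × Fin m)) (i : Fin n) (j : Fin m), (i, j) ∉ S →
      teamObj v c w α h (S ∪ {(i, j)}) - teamObj v c w α h S =
        v j * ∑ t, min (c i t) (max 0 (w j t - ∑ i' ∈ Assigned S j, c i' t))
          + α * h i j := by
  intro S i j hij
  have hiA : i ∉ Assigned S j := by simp [Assigned, hij]
  unfold teamObj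
  rw [← Finset.sum_sub_distrib]
  rw [Finset.sum_eq_single j]
  · rw [assigned_union, if_pos rfl]
    simp only [Finset.sum_insert hiA]
    have : ∀ t, min (w j t) (c i t + ∑ i' ∈ Assigned S j, c i' t)
        - min (w j t) (∑ i' ∈ Assigned S j, c i' t)
        = min (c i t) (max 0 (w j t - ∑ i' ∈ Assigned S j, c i' t)) := by
      intro t
      rw [add_comm]
      exact min_shift _ _ _ (hc i t)
    rw [← Finset.sum_congr rfl (fun t _ => this t), Finset.sum_sub_distrib]
    ring
  · intro j' _ hj'
    rw [assigned_union, if_neg hj']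
    ring
  · intro hj; exact absurd (Finset.mem_univ j) hj
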